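/- arXiv:2012.05624 — 2 statements merged into one kernel-verified Lean document; each statement's English description precedes it below -/
import Mathlib

section
/- Let N_V ≥ 2, β > 0 and Q_ref ∈ ℝ^{N_V}. Then the function f : M₊ → ℝ defined by f(Q) := Σ_{i=1}^{N_V−1} 1/(q^{i+1} − q^i) + (β/2)·|Q − Q_ref|₂² is proper from M₊ (with the subspace topology of ℝ^{N_V}) to ℝ: for every compact set K ⊂ ℝ, the preimage f^{-1}(K) is a compact subset of M₊. -/
/-- The 1D configuration space `M₊` of strictly increasing point configurations. -/
def Mplus1D (n : ℕ) : Set (EuclideanSpace ℝ (Fin n)) :=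
  { Q | StrictMono Q }

/-- The function `f(Q) = Σᵢ 1/(qⁱ⁺¹ − qⁱ) + (β/2)·|Q − Q_ref|₂²`. -/
noncomputable def f1D (n : ℕ) (β : ℝ) (Qref : EuclideanSpace ℝ (Fin n))
    (Q : EuclideanSpace ℝ (Fin n)) : ℝ :=
  (∑ i : Fin n, if h : (i : ℕ) + 1 < n then 1 / (Q ⟨(i : ℕ) + 1, h⟩ - Q i) else 0)
    + β / 2 * ‖Q - Qref‖ ^ 2

lemma summand_nonneg {n : ℕ} (Q : EuclideanSpace ℝ (Fin n)) (hQ : StrictMono Q)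
    (i : Fin n) :
    0 ≤ (if h : (i : ℕ) + 1 < n then 1 / (Q ⟨(i : ℕ) + 1, h⟩ - Q i) else 0) := by
  split
  · next h =>
    have : Q i < Q ⟨(i : ℕ) + 1, h⟩ := hQ (by simp [Fin.lt_def])
    have h2 : 0 < Q ⟨(i : ℕ) + 1, h⟩ - Q i := sub_pos.mpr this
    positivity
  · exact le_rfl

/-- `f` is proper on `M₊`: preimages of compact sets are compact subsets of `M₊`. -/
theorem stmt2 (n : ℕ) (hn : 2 ≤ n) (β : ℝ) (hβ : 0 < β)
    (Qref : EuclideanSpace ℝ (Fin n)) :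
    ∀ K : Set ℝ, IsCompact K →
      IsCompact { Q : EuclideanSpace ℝ (Fin n) | Q ∈ Mplus1D n ∧ f1D n β Qref Q ∈ K } ∧
      { Q : EuclideanSpace ℝ (Fin n) | Q ∈ Mplus1D n ∧ f1D n β Qref Q ∈ K } ⊆ Mplus1D n := by
  intro K hK
  set S := { Q : EuclideanSpace ℝ (Fin n) | Q ∈ Mplus1D n ∧ f1D n β Qref Q ∈ K } with hS
  refine ⟨?_, fun Q hQ => hQ.1⟩
  rcases Set.eq_empty_or_nonempty S with hSe | ⟨Q₀, hQ₀⟩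
  · rw [hSe]; exact isCompact_empty
  · -- K is nonempty on values of f, which are positive; let C be an upper bound.
    obtain ⟨C, hC⟩ := hK.bddAbove
    -- basic facts about members of S
    have key : ∀ Q ∈ S, (∀ (i : Fin n) (h : (i : ℕ) + 1 < n),
        1 / (Q ⟨(i : ℕ) + 1, h⟩ - Q i) ≤ C) ∧ β / 2 * ‖Q - Qref‖ ^ 2 ≤ C := by
      intro Q hQ
      have hfC : f1D n β Qref Q ≤ C := hC hQ.2
      have hsum_nonneg : 0 ≤ ∑ i : Fin n,
          if h : (i : ℕ) + 1 < n then 1 / (Q ⟨(i : ℕ) + 1, h⟩ - Q i) else 0 :=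
        Finset.sum_nonneg fun i _ => summand_nonneg Q hQ.1 i
      have hq_nonneg : 0 ≤ β / 2 * ‖Q - Qref‖ ^ 2 := by positivity
      constructor
      · intro i h
        have hterm : (if h : (i : ℕ) + 1 < n then 1 / (Q ⟨(i : ℕ) + 1, h⟩ - Q i) else 0)
            ≤ ∑ j : Fin n, if h : (j : ℕ) + 1 < n then 1 / (Q ⟨(j : ℕ) + 1, h⟩ - Q j) else 0 :=
          Finset.single_le_sum (fun j _ => summand_nonneg Q hQ.1 j) (Finset.mem_univ i)
        rw [dif_pos h] at hterm
        calc 1 / (Q ⟨(i : ℕ) + 1, h⟩ - Q i) ≤ _ := hterm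
          _ ≤ f1D n β Qref Q := le_add_of_nonneg_right hq_nonneg
          _ ≤ C := hfC
      · calc β / 2 * ‖Q - Qref‖ ^ 2 ≤ f1D n β Qref Q := le_add_of_nonneg_left hsum_nonneg
          _ ≤ C := hfC
    -- C is positive
    have hi0 : (0 : ℕ) + 1 < n := by omega
    have hgap0 : Q₀ (⟨0, by omega⟩ : Fin n) < Q₀ ⟨1, by omega⟩ :=
      hQ₀.1 (by simp [Fin.lt_def])
    have hCpos : 0 < C := by
      have := (key Q₀ hQ₀).1 ⟨0, by omega⟩ hi0
      have h2 : 0 < 1 / (Q₀ ⟨1, by omega⟩ - Q₀ ⟨0, by omega⟩) :=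
        one_div_pos.mpr (sub_pos.mpr hgap0)
      exact lt_of_lt_of_le h2 this
    -- gap lower bound for members of S
    have hgap : ∀ Q ∈ S, ∀ (i : Fin n) (h : (i : ℕ) + 1 < n),
        1 / C ≤ Q ⟨(i : ℕ) + 1, h⟩ - Q i := by
      intro Q hQ i h
      have hlt : Q i < Q ⟨(i : ℕ) + 1, h⟩ := hQ.1 (by simp [Fin.lt_def])
      have hpos : 0 < Q ⟨(i : ℕ) + 1, h⟩ - Q i := sub_pos.mpr hlt
      have hle := (key Q hQ).1 i h
      rw [div_le_iff₀ hpos] at hle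
      rw [div_le_iff₀ hCpos] at *
      nlinarith
    -- the closed "thick" set T
    set T : Set (EuclideanSpace ℝ (Fin n)) :=
      { Q | ∀ (i : Fin n) (h : (i : ℕ) + 1 < n), 1 / C ≤ Q ⟨(i : ℕ) + 1, h⟩ - Q i } with hT
    have hTclosed : IsClosed T := by
      have : T = ⋂ i : Fin n, ⋂ h : (i : ℕ) + 1 < n,
          { Q : EuclideanSpace ℝ (Fin n) | 1 / C ≤ Q ⟨(i : ℕ) + 1, h⟩ - Q i } := by
        ext Q; simp [hT, Set.mem_iInter]
      rw [this]
      refine isClosed_iInter fun i => isClosed_iInter fun h => ?_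
      have hc : Continuous fun Q : EuclideanSpace ℝ (Fin n) =>
          Q ⟨(i : ℕ) + 1, h⟩ - Q i :=
        ((EuclideanSpace.proj (⟨(i : ℕ) + 1, h⟩ : Fin n)).continuous).sub
          ((EuclideanSpace.proj i).continuous)
      exact isClosed_le continuous_const hc
    -- T consists of strictly monotone configurations
    have hTsub : T ⊆ Mplus1D n := by
      intro Q hQ
      obtain ⟨m, rfl⟩ : ∃ m, n = m + 1 := ⟨n - 1, by omega⟩
      refine Fin.strictMono_iff_lt_succ.mpr fun i => ?_
      have h : (i : ℕ) + 1 < m + 1 := Nat.succ_lt_succ i.isLt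
      have := hQ i.castSucc (by simpa using h)
      have h1C : 0 < 1 / C := one_div_pos.mpr hCpos
      have : 0 < Q ⟨(i : ℕ) + 1, by simpa using h⟩ - Q i.castSucc := lt_of_lt_of_le h1C this
      have heq : (⟨(i : ℕ) + 1, by simpa using h⟩ : Fin (m + 1)) = i.succ := rfl
      rw [heq] at this
      linarith [sub_pos.mp this]
    -- f is continuous on T
    have hfc : ContinuousOn (f1D n β Qref) T := by
      apply ContinuousOn.add
      · apply continuousOn_finset_sum
        intro i _
        by_cases h : (i : ℕ) + 1 < n
        · simp only [dif_pos h]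
          apply ContinuousOn.div continuousOn_const
          · exact (((EuclideanSpace.proj (⟨(i : ℕ) + 1, h⟩ : Fin n)).continuous).sub
              ((EuclideanSpace.proj i).continuous)).continuousOn
          · intro Q hQ
            have := hQ i h
            have h1C : 0 < 1 / C := one_div_pos.mpr hCpos
            exact ne_of_gt (lt_of_lt_of_le h1C this)
        · simp only [dif_neg h]; exact continuousOn_const
      · exact (continuous_const.mul (((continuous_id.sub continuous_const).norm).pow 2)).continuousOn
    -- S = T ∩ f⁻¹ K
    have hSeq : S = T ∩ f1D n β Qref ⁻¹' K := by
      ext Q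
      constructor
      · intro hQ; exact ⟨fun i h => hgap Q hQ i h, hQ.2⟩
      · intro ⟨h1, h2⟩; exact ⟨hTsub h1, h2⟩
    -- closedness
    have hSclosed : IsClosed S := by
      rw [hSeq]
      exact hfc.preimage_isClosed_of_isClosed hTclosed hK.isClosed
    -- boundedness
    have hSbdd : Bornology.IsBounded S := by
      apply (Metric.isBounded_closedBall (x := Qref) (r := Real.sqrt (2 * C / β))).subset
      intro Q hQ
      have h2 := (key Q hQ).2
      have hnorm : ‖Q - Qref‖ ^ 2 ≤ 2 * C / β := by
        rw [le_div_iff₀ hβ]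
        nlinarith
      have : ‖Q - Qref‖ ≤ Real.sqrt (2 * C / β) :=
        (Real.le_sqrt (norm_nonneg _) (by positivity)).mpr hnorm
      simpa [Metric.mem_closedBall, dist_eq_norm] using this
    exact Metric.isCompact_of_isClosed_isBounded hSclosed hSbdd
end

section
/- For any connectivity complex Δ with vertex set V = {1,…,N_V}, the set of admissible meshes M⁰_Δ is an open (possibly empty) subset of ℝ^{2×N_V}. -/
open scoped RealInnerProductSpace
open scoped Classical

noncomputable section

/-- Points in the plane `ℝ²`. -/
abbrev Pt : Type := EuclideanSpace ℝ (Fin 2)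

/-- The determinant of the 2×2 matrix with columns `v` and `w`. -/
def det2 (v w : Pt) : ℝ := v 0 * w 1 - v 1 * w 0

/-- A connectivity complex on the vertex set `Fin N`: a pure, 2-path connected
abstract simplicial 2-complex. -/
structure ConnectivityComplex (N : ℕ) where
  faces : Finset (Finset (Fin N))
  faces_nonempty : faces.Nonempty
  mem_nonempty : ∀ σ ∈ faces, σ.Nonempty
  card_le_three : ∀ σ ∈ faces, σ.card ≤ 3
  down_closed : ∀ σ ∈ faces, ∀ τ : Finset (Fin N), τ ⊆ σ → τ.Nonempty → τ ∈ faces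
  pure : ∀ σ ∈ faces, ∃ τ ∈ faces, τ.card = 3 ∧ σ ⊆ τ
  two_path_connected : ∀ σ ∈ faces, ∀ τ ∈ faces, σ.card = 3 → τ.card = 3 → σ ≠ τ →
    ∃ (m : ℕ) (c : Fin (m + 1) → Finset (Fin N)),
      c 0 = σ ∧ c (Fin.last m) = τ ∧
      (∀ i, c i ∈ faces ∧ (c i).card = 3) ∧
      (∀ i : Fin m, (c i.castSucc ∩ c i.succ).card = 2)

namespace PlanarMesh

variable {N : ℕ}

/-- The geometric realization `Σ_Δ(Q)`: the collection of the convex hulls of the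
vertex positions of all faces of `Δ`. -/
def SigmaSet (Δ : ConnectivityComplex N) (Q : Fin N → Pt) : Set (Set Pt) :=
  { s | ∃ σ ∈ Δ.faces, s = convexHull ℝ (Q '' (σ : Set (Fin N))) }

/-- `Q` is an admissible assignment of vertex positions for `Δ`: `Σ_Δ(Q)` is a geometric
simplicial complex in `ℝ²` whose associated abstract simplicial complex is exactly `Δ`. -/
def IsAdmissible (Δ : ConnectivityComplex N) (Q : Fin N → Pt) : Prop :=
  -- each member of `Σ_Δ(Q)` is a simplex, i.e. the convex hull of affinely independent points
  (∀ σ ∈ Δ.faces, AffineIndependent ℝ fun i : σ => Q i.1) ∧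
  -- every face of a member of `Σ_Δ(Q)` belongs to `Σ_Δ(Q)`
  (∀ σ ∈ Δ.faces, ∀ ρ : Finset (Fin N), ρ ⊆ σ → ρ.Nonempty →
      convexHull ℝ (Q '' (ρ : Set (Fin N))) ∈ SigmaSet Δ Q) ∧
  -- the nonempty intersection of any two members is a common face of both
  (∀ σ ∈ Δ.faces, ∀ τ ∈ Δ.faces,
      (convexHull ℝ (Q '' (σ : Set (Fin N))) ∩ convexHull ℝ (Q '' (τ : Set (Fin N)))).Nonempty →
      ∃ ρ : Finset (Fin N), ρ.Nonempty ∧ ρ ⊆ σ ∧ ρ ⊆ τ ∧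
        convexHull ℝ (Q '' (σ : Set (Fin N))) ∩ convexHull ℝ (Q '' (τ : Set (Fin N)))
          = convexHull ℝ (Q '' (ρ : Set (Fin N)))) ∧
  -- the abstract simplicial complex associated with `Σ_Δ(Q)` is exactly `Δ`
  (∀ σ : Finset (Fin N), σ.Nonempty →
      convexHull ℝ (Q '' (σ : Set (Fin N))) ∈ SigmaSet Δ Q → σ ∈ Δ.faces)

/-- The set `M⁰_Δ` of admissible meshes with connectivity `Δ`. -/
def M0 (Δ : ConnectivityComplex N) : Set (Fin N → Pt) := { Q | IsAdmissible Δ Q }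

/-- The (oriented) edges induced by an oriented triangle `[o 0, o 1, o 2]`. -/
def inducedEdges (o : Fin 3 → Fin N) : Finset (Fin N × Fin N) :=
  {(o 1, o 2), (o 2, o 0), (o 0, o 1)}

/-- A consistently oriented connectivity complex: each 2-face carries an orientation,
and two 2-faces sharing a 1-face induce opposite orientations on that 1-face. -/
structure OrientedComplex (N : ℕ) extends ConnectivityComplex N where
  orient : Finset (Fin N) → (Fin 3 → Fin N)
  orient_spec : ∀ σ ∈ faces, σ.card = 3 → Finset.image (orient σ) Finset.univ = σ
  consistent : ∀ σ ∈ faces, ∀ τ ∈ faces, σ.card = 3 → τ.card = 3 → σ ≠ τ →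
    (σ ∩ τ).card = 2 → ∀ a b : Fin N, a ∈ σ ∩ τ → b ∈ σ ∩ τ → a ≠ b →
      ((a, b) ∈ inducedEdges (orient σ) ↔ (b, a) ∈ inducedEdges (orient τ))

variable (Δ : OrientedComplex N)

/-- The signed area `A_Q[i₀,i₁,i₂]` of an oriented triangle. -/
def signedArea (Q : Fin N → Pt) (o : Fin 3 → Fin N) : ℝ :=
  det2 (Q (o 1) - Q (o 0)) (Q (o 2) - Q (o 1)) / 2

/-- The set `M⁺_Δ` of admissible oriented meshes. -/
def Mplus : Set (Fin N → Pt) :=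
  { Q | Q ∈ M0 Δ.toConnectivityComplex ∧
      ∀ σ ∈ Δ.faces, σ.card = 3 → 0 < signedArea Q (Δ.orient σ) }

/-- The manifold of planar triangular meshes `M_Δ(Q_ref)`: all `Q ∈ M⁺_Δ` which can be
joined to `Q_ref` by a continuous path inside `M⁺_Δ`. -/
def Mmesh (Qref : Fin N → Pt) : Set (Fin N → Pt) :=
  { Q | JoinedIn (Mplus Δ) Qref Q }

/-- The length of the `ℓ`-th edge (the one opposite the `ℓ`-th vertex). -/
def edgeLen (Q : Fin N → Pt) (o : Fin 3 → Fin N) (ℓ : Fin 3) : ℝ :=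
  ‖Q (o (ℓ + 1)) - Q (o (ℓ + 2))‖

/-- The `ℓ`-th height (the one through the `ℓ`-th vertex). -/
def height (Q : Fin N → Pt) (o : Fin 3 → Fin N) (ℓ : Fin 3) : ℝ :=
  2 * signedArea Q o / edgeLen Q o ℓ

/-- The 2-faces of `Δ`. -/
def twoFaces : Finset (Finset (Fin N)) := Δ.faces.filter fun σ => σ.card = 3

/-- The boundary 1-faces `E_∂`: those contained in exactly one 2-face. -/
def boundaryEdges : Finset (Finset (Fin N)) :=
  Δ.faces.filter fun e =>
    e.card = 2 ∧ (Δ.faces.filter fun σ => σ.card = 3 ∧ e ⊆ σ).card = 1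

/-- An interior 1-face: one contained in exactly two 2-faces. -/
def IsInteriorEdge (e : Finset (Fin N)) : Prop :=
  e ∈ Δ.faces ∧ e.card = 2 ∧ (Δ.faces.filter fun σ => σ.card = 3 ∧ e ⊆ σ).card = 2

/-- The boundary vertices `V_∂`: those contained in some boundary 1-face. -/
def boundaryVertices : Finset (Fin N) :=
  Finset.univ.filter fun i => ∃ e ∈ boundaryEdges Δ, i ∈ e

/-- The 1-norm of `w` in a rotated coordinate system whose first axis is the unit vector `u`. -/
def rot1norm (u w : Pt) : ℝ := |w 0 * u 0 + w 1 * u 1| + |w 1 * u 0 - w 0 * u 1|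

/-- The unit direction from `a` to `b`. -/
def unitDir (a b : Pt) : Pt := ‖b - a‖⁻¹ • (b - a)

/-- The distance `D_Q(i, [j₀, j₁])` of vertex `i` from the edge `[j₀, j₁]`, measured in the
1-norm of a rotated coordinate system with one axis parallel to `Q j₁ - Q j₀`. -/
def Dpair (Q : Fin N → Pt) (i j0 j1 : Fin N) : ℝ :=
  sInf ((fun x => rot1norm (unitDir (Q j0) (Q j1)) (Q i - x)) '' segment ℝ (Q j0) (Q j1))

/-- The distance `D_Q(i, e)` for an (unordered) 1-face `e`. -/
def Dedge (Q : Fin N → Pt) (i : Fin N) (e : Finset (Fin N)) : ℝ :=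
  sInf { r | ∃ j0 ∈ e, ∃ j1 ∈ e, j0 ≠ j1 ∧ r = Dpair Q i j0 j1 }

/-- The squared Frobenius norm of `Q - R`. -/
def frobSq (Q R : Fin N → Pt) : ℝ := ∑ i, ‖Q i - R i‖ ^ 2

/-- The Frobenius norm of `Q`. -/
def frobNorm (Q : Fin N → Pt) : ℝ := Real.sqrt (∑ i, ‖Q i‖ ^ 2)

/-- The augmentation function `f`. -/
def ffun (Qref : Fin N → Pt) (β1 β2 β3 : ℝ) (Q : Fin N → Pt) : ℝ :=
  (∑ σ ∈ twoFaces Δ, ∑ ℓ : Fin 3, β1 / height Q (Δ.orient σ) ℓ)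
  + (∑ e ∈ boundaryEdges Δ,
      ∑ i ∈ (boundaryVertices Δ).filter (fun i => i ∉ e), β2 / Dedge Q i e)
  + β3 / 2 * frobSq Q Qref

/-- The semiperimeter of a triangle. -/
def semiPerimeter (Q : Fin N → Pt) (o : Fin 3 → Fin N) : ℝ :=
  (edgeLen Q o 0 + edgeLen Q o 1 + edgeLen Q o 2) / 2

/-- The inradius of a triangle: area divided by semiperimeter. -/
def inradius (Q : Fin N → Pt) (o : Fin 3 → Fin N) : ℝ :=
  signedArea Q o / semiPerimeter Q o

/-- The circumradius of a triangle. -/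
def circumradius (Q : Fin N → Pt) (o : Fin 3 → Fin N) : ℝ :=
  edgeLen Q o 0 * edgeLen Q o 1 * edgeLen Q o 2 / (4 * signedArea Q o)

/-- The interior angle of the triangle at the vertex `o ℓ`. -/
def interiorAngle (Q : Fin N → Pt) (o : Fin 3 → Fin N) (ℓ : Fin 3) : ℝ :=
  InnerProductGeometry.angle (Q (o (ℓ + 1)) - Q (o ℓ)) (Q (o (ℓ + 2)) - Q (o ℓ))


/-! ### Auxiliary material for the proof of `stmt3` -/

section Stmt3Aux

lemma det2_smul_right (e : Pt) (r : ℝ) (a : Pt) : det2 e (r • a) = r * det2 e a := by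
  simp [det2]; ring

lemma det2_add_right (e a b : Pt) : det2 e (a + b) = det2 e a + det2 e b := by
  simp [det2]; ring

lemma det2_sub_right (e a b : Pt) : det2 e (a - b) = det2 e a - det2 e b := by
  simp [det2]; ring

lemma det2_smul_left (e : Pt) (r : ℝ) (a : Pt) : det2 (r • a) e = r * det2 a e := by
  simp [det2]; ring

lemma det2_add_left (e a b : Pt) : det2 (a + b) e = det2 a e + det2 b e := by
  simp [det2]; ring

lemma det2_self (e : Pt) : det2 e e = 0 := by simp [det2]; ring

lemma det2_zero_right (e : Pt) : det2 e 0 = 0 := by simp [det2]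

lemma det2_sum_right (e : Pt) {ι : Type*} (s : Finset ι) (g : ι → Pt) :
    det2 e (∑ i ∈ s, g i) = ∑ i ∈ s, det2 e (g i) := by
  classical
  induction s using Finset.cons_induction with
  | empty => simp [det2]
  | cons i s hi ih => rw [Finset.sum_cons, Finset.sum_cons, det2_add_right, ih]

/-- Membership in the convex hull of the images of a finset, via weights on indices. -/
lemma mem_hull_iff (Q : Fin N → Pt) (σ : Finset (Fin N)) (x : Pt) :
    x ∈ convexHull ℝ (Q '' (σ : Set (Fin N))) ↔
      ∃ w : Fin N → ℝ, (∀ i ∈ σ, 0 ≤ w i) ∧ ∑ i ∈ σ, w i = 1 ∧ ∑ i ∈ σ, w i • Q i = x := by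
  constructor
  · intro hx
    rcases σ.eq_empty_or_nonempty with rfl | ⟨j0, hj0⟩
    · simp at hx
    rw [convexHull_eq] at hx
    obtain ⟨ι, t, w, z, hw0, hw1, hz, hxx⟩ := hx
    have hgex : ∀ i : ι, ∃ j : Fin N, i ∈ t → (j ∈ σ ∧ Q j = z i) := by
      intro i
      by_cases hi : i ∈ t
      · obtain ⟨j, hj, hQj⟩ := hz i hi
        exact ⟨j, fun _ => ⟨hj, hQj⟩⟩
      · exact ⟨j0, fun h => absurd h hi⟩
    choose g hg using hgex
    have hmaps : ∀ i ∈ t, g i ∈ σ := fun i hi => (hg i hi).1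
    refine ⟨fun j => ∑ i ∈ t.filter (fun i => g i = j), w i, ?_, ?_, ?_⟩
    · intro j _
      exact Finset.sum_nonneg fun i hi => hw0 i (Finset.mem_filter.1 hi).1
    · rw [Finset.sum_fiberwise_of_maps_to hmaps, hw1]
    · have h1 : ∀ j ∈ σ, (∑ i ∈ t.filter (fun i => g i = j), w i) • Q j
          = ∑ i ∈ t.filter (fun i => g i = j), w i • Q (g i) := by
        intro j _
        rw [Finset.sum_smul]
        refine Finset.sum_congr rfl fun i hi => ?_
        rw [(Finset.mem_filter.1 hi).2]
      calc ∑ j ∈ σ, (∑ i ∈ t.filter (fun i => g i = j), w i) • Q j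
          = ∑ j ∈ σ, ∑ i ∈ t.filter (fun i => g i = j), w i • Q (g i) :=
            Finset.sum_congr rfl h1
        _ = ∑ i ∈ t, w i • Q (g i) := Finset.sum_fiberwise_of_maps_to hmaps _
        _ = ∑ i ∈ t, w i • z i := by
            refine Finset.sum_congr rfl fun i hi => ?_
            rw [(hg i hi).2]
        _ = x := by rw [← Finset.centerMass_eq_of_sum_1 _ _ hw1, hxx]
  · rintro ⟨w, hw0, hw1, rfl⟩
    have := Finset.centerMass_mem_convexHull (t := σ) (w := w) (z := Q) hw0
      (by rw [hw1]; norm_num) (fun i hi => Set.mem_image_of_mem Q hi)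
    rwa [Finset.centerMass_eq_of_sum_1 _ _ hw1] at this

/-- A convex combination, recentred at a point. -/
lemma combo_sub {σ : Finset (Fin N)} {w : Fin N → ℝ} (hw1 : ∑ i ∈ σ, w i = 1)
    (y : Fin N → Pt) (p : Pt) :
    (∑ i ∈ σ, w i • y i) - p = ∑ i ∈ σ, w i • (y i - p) := by
  simp only [smul_sub, Finset.sum_sub_distrib, ← Finset.sum_smul, hw1, one_smul]

/-- Affine evaluation of `det2 e (· - p)` on a convex combination. -/
lemma det2_combo (e p : Pt) {σ : Finset (Fin N)} {w : Fin N → ℝ}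
    (hw1 : ∑ i ∈ σ, w i = 1) (y : Fin N → Pt) :
    det2 e ((∑ i ∈ σ, w i • y i) - p) = ∑ i ∈ σ, w i * det2 e (y i - p) := by
  rw [combo_sub hw1, det2_sum_right]
  exact Finset.sum_congr rfl fun i _ => det2_smul_right e (w i) (y i - p)

/-- Perturbing the vertices by at most `ε` moves the convex hull by at most `ε`. -/
lemma hull_approx {Q Q' : Fin N → Pt} {σ : Finset (Fin N)} {ε : ℝ}
    (h : ∀ i ∈ σ, dist (Q' i) (Q i) ≤ ε) {x : Pt}
    (hx : x ∈ convexHull ℝ (Q' '' (σ : Set (Fin N)))) :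
    ∃ y ∈ convexHull ℝ (Q '' (σ : Set (Fin N))), dist x y ≤ ε := by
  obtain ⟨w, hw0, hw1, rfl⟩ := (mem_hull_iff Q' σ x).1 hx
  refine ⟨∑ i ∈ σ, w i • Q i, (mem_hull_iff Q σ _).2 ⟨w, hw0, hw1, rfl⟩, ?_⟩
  rw [dist_eq_norm, ← Finset.sum_sub_distrib]
  have h1 : ∀ i ∈ σ, w i • Q' i - w i • Q i = w i • (Q' i - Q i) := fun i _ => (smul_sub _ _ _).symm
  rw [Finset.sum_congr rfl h1]
  calc ‖∑ i ∈ σ, w i • (Q' i - Q i)‖ ≤ ∑ i ∈ σ, ‖w i • (Q' i - Q i)‖ := norm_sum_le _ _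
    _ ≤ ∑ i ∈ σ, w i * ε := by
        refine Finset.sum_le_sum fun i hi => ?_
        rw [norm_smul, Real.norm_eq_abs, abs_of_nonneg (hw0 i hi)]
        exact mul_le_mul_of_nonneg_left (by rw [← dist_eq_norm]; exact h i hi) (hw0 i hi)
    _ = ε := by rw [← Finset.sum_mul, hw1, one_mul]

lemma hull_compact (Q : Fin N → Pt) (σ : Finset (Fin N)) :
    IsCompact (convexHull ℝ (Q '' (σ : Set (Fin N)))) :=
  (σ.finite_toSet.image Q).isCompact_convexHull ℝ

lemma hull_nonempty (Q : Fin N → Pt) {σ : Finset (Fin N)} (hσ : σ.Nonempty) :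
    (convexHull ℝ (Q '' (σ : Set (Fin N)))).Nonempty := by
  obtain ⟨i, hi⟩ := hσ
  exact ⟨Q i, subset_convexHull ℝ _ (Set.mem_image_of_mem Q hi)⟩

lemma eventually_dist_lt (Q : Fin N → Pt) {δ : ℝ} (hδ : 0 < δ) :
    ∀ᶠ Q' in nhds Q, ∀ i, dist (Q' i) (Q i) < δ := by
  refine Filter.eventually_all.2 fun i => ?_
  have hc : Continuous fun Q' : Fin N → Pt => dist (Q' i) (Q i) :=
    (continuous_apply i).dist continuous_const
  have h0 : dist (Q i) (Q i) < δ := by simpa using hδ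
  exact hc.continuousAt.eventually_lt continuousAt_const h0

end Stmt3Aux

section AI

/-- Reduce the subtype-indexed weights in `affineIndependent_iff` to weights on `Fin N`. -/
lemma affineIndependent_of_weights {Q : Fin N → Pt} {σ : Finset (Fin N)}
    (h : ∀ W : Fin N → ℝ, ∑ i ∈ σ, W i = 0 → ∑ i ∈ σ, W i • Q i = 0 → ∀ i ∈ σ, W i = 0) :
    AffineIndependent ℝ (fun i : σ => Q i.1) := by
  rw [affineIndependent_iff]
  intro s w hw0 hws e he
  set W : Fin N → ℝ := fun j => ∑ e ∈ s.filter (fun e => e.1 = j), w e with hW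
  have hmaps : ∀ e ∈ s, (e : { x // x ∈ σ }).1 ∈ σ := fun e _ => e.2
  have h1 : ∑ j ∈ σ, W j = 0 := by
    rw [hW]
    rw [Finset.sum_fiberwise_of_maps_to hmaps]
    exact hw0
  have h2 : ∑ j ∈ σ, W j • Q j = 0 := by
    have hc : ∀ j ∈ σ, W j • Q j = ∑ e ∈ s.filter (fun e => e.1 = j), w e • Q e.1 := by
      intro j _
      rw [hW, Finset.sum_smul]
      exact Finset.sum_congr rfl fun e he' => by rw [(Finset.mem_filter.1 he').2]
    rw [Finset.sum_congr rfl hc, Finset.sum_fiberwise_of_maps_to hmaps]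
    exact hws
  have hWe : W e.1 = w e := by
    rw [hW]
    refine Finset.sum_eq_single_of_mem e (Finset.mem_filter.2 ⟨he, rfl⟩) ?_
    intro e' he' hne
    exact absurd (Subtype.ext (Finset.mem_filter.1 he').2) hne
  rw [← hWe]
  exact h W h1 h2 e.1 e.2

lemma sum_pair_of_ne {u v : Fin N} (huv : u ≠ v) (f : Fin N → ℝ) :
    ∑ i ∈ ({u, v} : Finset (Fin N)), f i = f u + f v := by
  rw [Finset.sum_insert (by simp [huv]), Finset.sum_singleton]

lemma sum_pair_of_ne' {u v : Fin N} (huv : u ≠ v) (f : Fin N → Pt) :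
    ∑ i ∈ ({u, v} : Finset (Fin N)), f i = f u + f v := by
  rw [Finset.sum_insert (by simp [huv]), Finset.sum_singleton]

lemma affineIndependent_single {Q : Fin N → Pt} {σ : Finset (Fin N)} (hσ : σ.card ≤ 1) :
    AffineIndependent ℝ (fun i : σ => Q i.1) := by
  have hsub : Subsingleton { x // x ∈ σ } := by
    constructor
    rintro ⟨a, ha⟩ ⟨b, hb⟩
    exact Subtype.ext (Finset.card_le_one.1 hσ a ha b hb)
  exact affineIndependent_of_subsingleton ℝ _

lemma affineIndependent_pair {Q : Fin N → Pt} {σ : Finset (Fin N)} {u v : Fin N}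
    (huv : u ≠ v) (hσ : σ = {u, v}) (h : Q u ≠ Q v) :
    AffineIndependent ℝ (fun i : σ => Q i.1) := by
  refine affineIndependent_of_weights fun W h1 h2 i hi => ?_
  rw [hσ, sum_pair_of_ne huv] at h1
  rw [hσ, sum_pair_of_ne' huv (fun i => W i • Q i)] at h2
  have hWu : W u = -W v := by linarith
  rw [hWu] at h2
  have h3 : W v • (Q v - Q u) = 0 := by
    rw [smul_sub]
    rw [neg_smul] at h2
    linear_combination (norm := module) h2
  have hv0 : W v = 0 := by
    rcases smul_eq_zero.1 h3 with h4 | h4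
    · exact h4
    · exact absurd (sub_eq_zero.1 h4) (Ne.symm h)
  rw [hσ] at hi
  rcases Finset.mem_insert.1 hi with rfl | hi
  · rw [hWu, hv0, neg_zero]
  · rw [Finset.mem_singleton.1 hi, hv0]

/-- If `det2 E1 E2 ≠ 0` then a vanishing combination has vanishing coefficients. -/
lemma coeff_zero_of_det2_ne {E1 E2 : Pt} (hd : det2 E1 E2 ≠ 0) {s t : ℝ}
    (h : s • E1 + t • E2 = 0) : s = 0 ∧ t = 0 := by
  have h1 : det2 (s • E1 + t • E2) E2 = 0 := by rw [h]; simp [det2]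
  have h2 : det2 E1 (s • E1 + t • E2) = 0 := by rw [h]; simp [det2]
  rw [det2_add_left, det2_smul_left, det2_smul_left, det2_self] at h1
  rw [det2_add_right, det2_smul_right, det2_smul_right, det2_self] at h2
  have hst : s * det2 E1 E2 = 0 := by linarith
  have htt : t * det2 E1 E2 = 0 := by linarith
  exact ⟨by rcases mul_eq_zero.1 hst with h | h; exact h; exact absurd h hd,
    by rcases mul_eq_zero.1 htt with h | h; exact h; exact absurd h hd⟩

lemma affineIndependent_triple {Q : Fin N → Pt} {σ : Finset (Fin N)} {u v c : Fin N}
    (huv : u ≠ v) (huc : u ≠ c) (hvc : v ≠ c) (hσ : σ = {u, v, c})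
    (hd : det2 (Q v - Q u) (Q c - Q u) ≠ 0) :
    AffineIndependent ℝ (fun i : σ => Q i.1) := by
  refine affineIndependent_of_weights fun W h1 h2 i hi => ?_
  have hvσ : ({u, v, c} : Finset (Fin N)) = insert u {v, c} := rfl
  rw [hσ, hvσ, Finset.sum_insert (by simp [huv, huc]), sum_pair_of_ne hvc] at h1
  rw [hσ, hvσ, Finset.sum_insert (by simp [huv, huc]),
    sum_pair_of_ne' hvc (fun i => W i • Q i)] at h2
  have hWu : W u = -W v - W c := by linarith
  have h3 : W v • (Q v - Q u) + W c • (Q c - Q u) = 0 := by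
    rw [hWu] at h2
    rw [smul_sub, smul_sub]
    linear_combination (norm := module) h2
  obtain ⟨hv0, hc0⟩ := coeff_zero_of_det2_ne hd h3
  rw [hσ] at hi
  rcases Finset.mem_insert.1 hi with rfl | hi
  · rw [hWu, hv0, hc0]; ring
  rcases Finset.mem_insert.1 hi with rfl | hi
  · exact hv0
  · rw [Finset.mem_singleton.1 hi]; exact hc0

lemma ne_of_affineIndependent {Q : Fin N → Pt} {σ : Finset (Fin N)}
    (h : AffineIndependent ℝ (fun i : σ => Q i.1)) {u v : Fin N}
    (hu : u ∈ σ) (hv : v ∈ σ) (huv : u ≠ v) : Q u ≠ Q v := by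
  intro he
  exact huv (Subtype.mk_eq_mk.1 (h.injective (a₁ := ⟨u, hu⟩) (a₂ := ⟨v, hv⟩) he))

/-- Affine independence of a triple forces a nonzero determinant. -/
lemma det2_ne_of_affineIndependent {Q : Fin N → Pt} {σ : Finset (Fin N)}
    (h : AffineIndependent ℝ (fun i : σ => Q i.1)) {u v c : Fin N}
    (hu : u ∈ σ) (hv : v ∈ σ) (hc : c ∈ σ)
    (huv : u ≠ v) (huc : u ≠ c) (hvc : v ≠ c) :
    det2 (Q v - Q u) (Q c - Q u) ≠ 0 := by
  intro hd
  set V1 : Pt := Q v - Q u with hV1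
  set V2 : Pt := Q c - Q u with hV2
  have hV1ne : V1 ≠ 0 := sub_ne_zero.2 (Ne.symm (ne_of_affineIndependent h hu hv huv))
  -- produce a nontrivial vanishing combination `a • V1 + b • V2 = 0` with `b ≠ 0`
  have hab : ∃ a b : ℝ, b ≠ 0 ∧ a • V1 + b • V2 = 0 := by
    by_cases h0 : V1 0 ≠ 0
    · refine ⟨V2 0, -(V1 0), neg_ne_zero.2 h0, ?_⟩
      have hd' : V1 0 * V2 1 - V1 1 * V2 0 = 0 := hd
      ext j
      fin_cases j <;>
        simp only [PiLp.add_apply, PiLp.smul_apply, PiLp.zero_apply, smul_eq_mul,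
          Fin.isValue, Fin.mk_zero, Fin.mk_one] <;>
        linarith [hd']
    · push_neg at h0
      have h1 : V1 1 ≠ 0 := by
        intro h1
        apply hV1ne
        ext j; fin_cases j <;> simp [h0, h1]
      refine ⟨V2 1, -(V1 1), neg_ne_zero.2 h1, ?_⟩
      have hd' : V1 0 * V2 1 - V1 1 * V2 0 = 0 := hd
      ext j
      fin_cases j <;>
        simp only [PiLp.add_apply, PiLp.smul_apply, PiLp.zero_apply, smul_eq_mul,
          Fin.isValue, Fin.mk_zero, Fin.mk_one] <;>
        linarith [hd']
  obtain ⟨a, b, hb, hab⟩ := hab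
  -- weights
  set W : Fin N → ℝ := fun j => if j = v then a else if j = c then b else if j = u then -(a + b) else 0 with hW
  have hsupp : ∀ j ∈ σ, j ∉ ({u, v, c} : Finset (Fin N)) → W j = 0 := by
    intro j _ hj
    simp only [Finset.mem_insert, Finset.mem_singleton, not_or] at hj
    simp [hW, hj.1, hj.2.1, hj.2.2]
  have hsubs : ({u, v, c} : Finset (Fin N)) ⊆ σ := by
    intro j hj
    rcases Finset.mem_insert.1 hj with rfl | hj
    · exact hu
    rcases Finset.mem_insert.1 hj with rfl | hj
    · exact hv
    · rw [Finset.mem_singleton.1 hj]; exact hc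
  have hWu : W u = -(a + b) := by simp [hW, huv, huc]
  have hWv : W v = a := by simp [hW]
  have hWc : W c = b := by simp [hW, Ne.symm hvc]
  have h1 : ∑ i ∈ σ, W i = 0 := by
    rw [← Finset.sum_subset hsubs hsupp]
    rw [show ({u, v, c} : Finset (Fin N)) = insert u {v, c} from rfl,
      Finset.sum_insert (by simp [huv, huc]), sum_pair_of_ne hvc, hWu, hWv, hWc]
    ring
  have h2 : ∑ i ∈ σ, W i • Q i = 0 := by
    rw [← Finset.sum_subset hsubs (fun j hj hj' => by rw [hsupp j hj hj', zero_smul])]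
    rw [show ({u, v, c} : Finset (Fin N)) = insert u {v, c} from rfl,
      Finset.sum_insert (by simp [huv, huc]), sum_pair_of_ne' hvc (fun i => W i • Q i),
      hWu, hWv, hWc]
    rw [hV1, hV2, smul_sub, smul_sub] at hab
    linear_combination (norm := module) hab
  have := affineIndependent_iff.1 h Finset.univ (fun e => W e.1)
    (by rwa [← Finset.sum_coe_sort σ W] at h1)
    (by rwa [← Finset.sum_coe_sort σ (fun i => W i • Q i)] at h2)
    ⟨c, hc⟩ (Finset.mem_univ _)
  have h3 : W c = 0 := this
  rw [hWc] at h3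
  exact hb h3

end AI




section Geometry

/-- Cramer's rule in the plane. -/
lemma cramer_repr {E D : Pt} (hd : det2 E D ≠ 0) (y : Pt) :
    y = (det2 y D / det2 E D) • E + (det2 E y / det2 E D) • D := by
  have hd' : E 0 * D 1 - E 1 * D 0 ≠ 0 := hd
  have hd'' : D 1 * E 0 - D 0 * E 1 ≠ 0 := by contrapose! hd'; linarith
  ext j
  fin_cases j <;>
    simp only [PiLp.add_apply, PiLp.smul_apply, smul_eq_mul, Fin.isValue, Fin.mk_zero,
      Fin.mk_one, det2] <;>
    field_simp <;> ring

lemma hull_singleton (Q : Fin N → Pt) (v : Fin N) :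
    convexHull ℝ (Q '' (({v} : Finset (Fin N)) : Set (Fin N))) = {Q v} := by
  rw [Finset.coe_singleton, Set.image_singleton, convexHull_singleton]

/-- Points of the hull of a face, written in terms of the cone at a vertex `v`. -/
lemma gen_repr {σ : Finset (Fin N)} {v i1 i2 : Fin N} (h1 : i1 ≠ v) (h2 : i2 ≠ v)
    (hσ : σ = insert v {i1, i2}) (R : Fin N → Pt) {x : Pt}
    (hx : x ∈ convexHull ℝ (R '' (σ : Set (Fin N)))) :
    ∃ s t : ℝ, 0 ≤ s ∧ 0 ≤ t ∧ x - R v = s • (R i1 - R v) + t • (R i2 - R v) := by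
  obtain ⟨w, hw0, hw1, hx⟩ := (mem_hull_iff R σ x).1 hx
  have hxv : x - R v = ∑ i ∈ σ, w i • (R i - R v) := by
    rw [← hx]; exact combo_sub hw1 R (R v)
  by_cases h12 : i1 = i2
  · subst h12
    have hσ' : σ = insert v {i1} := by rw [hσ]; congr 1; simp
    refine ⟨w i1, 0, hw0 i1 (by simp [hσ']), le_refl 0, ?_⟩
    rw [hxv, hσ', Finset.sum_insert (by simp [Ne.symm h1]), Finset.sum_singleton,
      sub_self, smul_zero, zero_add, zero_smul, add_zero]
  · refine ⟨w i1, w i2, hw0 i1 (by simp [hσ]), hw0 i2 (by simp [hσ]), ?_⟩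
    rw [hxv, hσ, Finset.sum_insert (by simp [Ne.symm h1, Ne.symm h2]),
      Finset.sum_insert (by simp [h12]), Finset.sum_singleton, sub_self, smul_zero, zero_add]

/-- Small cone combinations at a vertex belong to the hull of the face. -/
lemma gen_mem {σ : Finset (Fin N)} {v i1 i2 : Fin N}
    (hσ : σ = insert v {i1, i2}) (R : Fin N → Pt) {s t : ℝ}
    (hs : 0 ≤ s) (ht : 0 ≤ t) (hst : s + t ≤ 1) :
    R v + (s • (R i1 - R v) + t • (R i2 - R v)) ∈ convexHull ℝ (R '' (σ : Set (Fin N))) := by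
  have hv : R v ∈ R '' (σ : Set (Fin N)) := Set.mem_image_of_mem R (by simp [hσ])
  have hm1 : R i1 ∈ R '' (σ : Set (Fin N)) := Set.mem_image_of_mem R (by simp [hσ])
  have hm2 : R i2 ∈ R '' (σ : Set (Fin N)) := Set.mem_image_of_mem R (by simp [hσ])
  have hsum1 : ∑ i : Fin 3, (![1 - s - t, s, t]) i = 1 := by
    simp [Fin.sum_univ_three]; ring
  have hmem := Finset.centerMass_mem_convexHull (t := (Finset.univ : Finset (Fin 3)))
    (w := ![1 - s - t, s, t]) (z := ![R v, R i1, R i2])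
    (fun i _ => by fin_cases i <;> simp [hs, ht] <;> linarith)
    (by rw [hsum1]; norm_num)
    (fun i _ => by fin_cases i <;> first | exact hv | exact hm1 | exact hm2)
  rw [Finset.centerMass_eq_of_sum_1 _ _ hsum1] at hmem
  have hexp : ∑ i : Fin 3, (![1 - s - t, s, t]) i • (![R v, R i1, R i2]) i
      = R v + (s • (R i1 - R v) + t • (R i2 - R v)) := by
    rw [Fin.sum_univ_three]
    simp only [Matrix.cons_val_zero, Matrix.cons_val_one, Matrix.head_cons,
      Matrix.cons_val_two, Matrix.tail_cons]
    module
  rwa [hexp] at hmem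

/-- Two triangles sharing the edge `{u, v}` and intersecting exactly in it cannot have
their third vertices strictly on the same side of the line through the edge. -/
lemma edge_sign {Q : Fin N → Pt} {σ τ ρ : Finset (Fin N)} {u v c d : Fin N}
    (hρ : ρ = {u, v}) (hσ : σ = insert c ρ) (hτ : τ = insert d ρ)
    (huv : u ≠ v) (hcu : c ≠ u) (hcv : c ≠ v) (hdu : d ≠ u) (hdv : d ≠ v)
    (hKL : convexHull ℝ (Q '' (σ : Set (Fin N))) ∩ convexHull ℝ (Q '' (τ : Set (Fin N)))
      = convexHull ℝ (Q '' (ρ : Set (Fin N))))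
    (hfc : 0 < det2 (Q v - Q u) (Q c - Q u))
    (hfd : 0 < det2 (Q v - Q u) (Q d - Q u)) : False := by
  have hσ' : σ = insert u {v, c} := by
    rw [hσ, hρ]; ext x
    simp only [Finset.mem_insert, Finset.mem_singleton]; tauto
  have hτ' : τ = insert d {u, v} := by rw [hτ, hρ]
  have hfdne : det2 (Q v - Q u) (Q d - Q u) ≠ 0 := ne_of_gt hfd
  set B : ℝ := det2 (Q c - Q u) (Q d - Q u) / det2 (Q v - Q u) (Q d - Q u) with hB
  set F : ℝ := det2 (Q v - Q u) (Q c - Q u) / det2 (Q v - Q u) (Q d - Q u) with hF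
  have hFpos : 0 < F := div_pos hfc hfd
  -- choose a small positive parameter t
  obtain ⟨t, ht0, htle, htB, htF⟩ :
      ∃ t : ℝ, 0 < t ∧ t ≤ 1/4 ∧ t * |B| ≤ 1/4 ∧ t * F ≤ 1/4 := by
    set C : ℝ := |B| + F + 1 with hC
    have hCpos : 0 < C := by
      have := abs_nonneg B
      rw [hC]; linarith
    have key : ∀ X : ℝ, X ≤ C → 1/(4*C) * X ≤ 1/4 := by
      intro X hXC
      have h1 : 1/(4*C) * X ≤ 1/(4*C) * C :=
        mul_le_mul_of_nonneg_left hXC (by positivity)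
      have h2 : 1/(4*C) * C = 1/4 := by field_simp
      linarith
    have hB' : |B| ≤ C := by
      rw [hC]; linarith
    have hF' : F ≤ C := by
      have := abs_nonneg B
      rw [hC]; linarith
    have h1' : (1:ℝ) ≤ C := by
      have := abs_nonneg B
      rw [hC]; linarith
    refine ⟨1/(4*C), by positivity, ?_, key _ hB', key _ hF'⟩
    have := key 1 h1'
    linarith [this]
  -- the point z
  set z : Pt := Q u + (((1 - t) / 2) • (Q v - Q u) + t • (Q c - Q u)) with hz
  -- z is in the hull of σ
  have hzK : z ∈ convexHull ℝ (Q '' (σ : Set (Fin N))) :=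
    gen_mem hσ' Q (s := (1 - t) / 2) (t := t) (by linarith) (le_of_lt ht0) (by linarith)
  -- Cramer coordinates of z with respect to (Qv - Qu, Qd - Qu) at Q u
  have hzu : z - Q u = ((1 - t) / 2) • (Q v - Q u) + t • (Q c - Q u) := by rw [hz]; abel
  have hdet1 : det2 (z - Q u) (Q d - Q u)
      = (1 - t) / 2 * det2 (Q v - Q u) (Q d - Q u) + t * (det2 (Q c - Q u) (Q d - Q u)) := by
    rw [hzu, det2_add_left, det2_smul_left, det2_smul_left]
  have hdet2' : det2 (Q v - Q u) (z - Q u) = t * det2 (Q v - Q u) (Q c - Q u) := by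
    rw [hzu, det2_add_right, det2_smul_right, det2_smul_right, det2_self]
    ring
  set β : ℝ := (1 - t) / 2 + t * B with hβ
  set γ : ℝ := t * F with hγ
  have hβeq : det2 (z - Q u) (Q d - Q u) / det2 (Q v - Q u) (Q d - Q u) = β := by
    rw [hdet1, hβ, hB]
    field_simp
    try ring
  have hγeq : det2 (Q v - Q u) (z - Q u) / det2 (Q v - Q u) (Q d - Q u) = γ := by
    rw [hdet2', hγ, hF]
    try ring
  have hzrepr : z - Q u = β • (Q v - Q u) + γ • (Q d - Q u) := by
    rw [← hβeq, ← hγeq]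
    exact cramer_repr hfdne (z - Q u)
  -- bounds on the coordinates
  have htBlow : -(1/4 : ℝ) ≤ t * B := by
    have h1 : t * (-|B|) ≤ t * B := mul_le_mul_of_nonneg_left (neg_abs_le B) (le_of_lt ht0)
    have h2 : t * (-|B|) = -(t * |B|) := by ring
    linarith
  have htBhigh : t * B ≤ 1/4 := by
    have h1 : t * B ≤ t * |B| := mul_le_mul_of_nonneg_left (le_abs_self B) (le_of_lt ht0)
    linarith
  have hγ0 : 0 < γ := by rw [hγ]; exact mul_pos ht0 hFpos
  have hγle : γ ≤ 1/4 := by rw [hγ]; linarith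
  have hβ0 : 0 ≤ β := by rw [hβ]; linarith
  have hβγ : β + γ ≤ 1 := by rw [hβ]; linarith
  -- z is in the hull of τ
  have hzL : z ∈ convexHull ℝ (Q '' (τ : Set (Fin N))) := by
    refine (mem_hull_iff Q τ z).2
      ⟨fun i => if i = d then γ else if i = u then 1 - β - γ else β, ?_, ?_, ?_⟩
    · intro i _
      dsimp only
      split
      · exact le_of_lt hγ0
      split
      · linarith
      · exact hβ0
    · rw [hτ', Finset.sum_insert (by simp [hdu, hdv]), sum_pair_of_ne huv]
      simp only [Ne.symm hdu, Ne.symm hdv, Ne.symm huv, if_true, if_false, ite_true,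
        ite_false, if_neg, reduceIte]
      ring
    · rw [hτ', Finset.sum_insert (by simp [hdu, hdv]),
        sum_pair_of_ne' huv (fun i => (if i = d then γ else if i = u then 1 - β - γ else β) • Q i)]
      simp only [Ne.symm hdu, Ne.symm hdv, Ne.symm huv, if_true, if_false, ite_true,
        ite_false, if_neg, reduceIte]
      linear_combination (norm := module) -hzrepr
  -- contradiction: z lies on the hull of the common edge, but has positive height
  have hzρ : z ∈ convexHull ℝ (Q '' (ρ : Set (Fin N))) := by
    rw [← hKL]; exact ⟨hzK, hzL⟩
  obtain ⟨w, hw0, hw1, hzw⟩ := (mem_hull_iff Q ρ z).1 hzρ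
  have hf0 : det2 (Q v - Q u) (z - Q u) = ∑ i ∈ ρ, w i * det2 (Q v - Q u) (Q i - Q u) := by
    rw [← hzw]; exact det2_combo (Q v - Q u) (Q u) hw1 Q
  rw [hρ, sum_pair_of_ne huv, sub_self, det2_zero_right, det2_self, mul_zero, mul_zero,
    add_zero] at hf0
  rw [hdet2'] at hf0
  nlinarith [mul_pos ht0 hfc]

end Geometry

section Eventually

lemma continuous_coord (i j : Fin N) (k : Fin 2) :
    Continuous fun Q' : Fin N → Pt => (Q' i - Q' j) k := by
  have h1 : Continuous fun Q' : Fin N → Pt => Q' i - Q' j :=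
    (continuous_apply i).sub (continuous_apply j)
  have h2 : Continuous fun x : Pt => x k := by
    have := (EuclideanSpace.proj (𝕜 := ℝ) (ι := Fin 2) k).continuous
    convert this using 1
    rfl
  exact h2.comp h1

lemma continuous_det2_sub (u v c : Fin N) :
    Continuous fun Q' : Fin N → Pt => det2 (Q' v - Q' u) (Q' c - Q' u) := by
  simp only [det2]
  exact ((continuous_coord v u 0).mul (continuous_coord c u 1)).sub
    ((continuous_coord v u 1).mul (continuous_coord c u 0))

/-- Affine independence of the vertices of a face is stable under perturbation. -/
lemma AI_eventually {Q : Fin N → Pt} {σ : Finset (Fin N)} (hc : σ.card ≤ 3)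
    (h : AffineIndependent ℝ (fun i : σ => Q i.1)) :
    ∀ᶠ Q' in nhds Q, AffineIndependent ℝ (fun i : σ => Q' i.1) := by
  have hcases : σ.card ≤ 1 ∨ σ.card = 2 ∨ σ.card = 3 := by omega
  rcases hcases with h1 | h2 | h3
  · exact Filter.Eventually.of_forall fun Q' => affineIndependent_single h1
  · obtain ⟨u, v, huv, hσ2⟩ := Finset.card_eq_two.1 h2
    have hu : u ∈ σ := by simp [hσ2]
    have hv : v ∈ σ := by simp [hσ2]
    have hne : Q u ≠ Q v := ne_of_affineIndependent h hu hv huv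
    have hco : Continuous fun Q' : Fin N → Pt => Q' u - Q' v :=
      (continuous_apply u).sub (continuous_apply v)
    have := hco.continuousAt (x := Q) |>.eventually_ne (sub_ne_zero.2 hne)
    exact this.mono fun Q' hQ' => affineIndependent_pair huv hσ2 (sub_ne_zero.1 hQ')
  · obtain ⟨u, v, c, huv, huc, hvc, hσ3⟩ := Finset.card_eq_three.1 h3
    have hu : u ∈ σ := by simp [hσ3]
    have hv : v ∈ σ := by simp [hσ3]
    have hcc : c ∈ σ := by simp [hσ3]
    have hd := det2_ne_of_affineIndependent h hu hv hcc huv huc hvc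
    have := (continuous_det2_sub u v c).continuousAt (x := Q) |>.eventually_ne hd
    exact this.mono fun Q' hQ' => affineIndependent_triple huv huc hvc hσ3 hQ'

/-- Distinct hulls stay distinct under perturbation (auxiliary one-sided version). -/
lemma hull_ne_eventually_aux {Q : Fin N → Pt} {σ τ : Finset (Fin N)} (hτ : τ.Nonempty)
    {p : Pt} (hp : p ∈ convexHull ℝ (Q '' (σ : Set (Fin N))))
    (hpn : p ∉ convexHull ℝ (Q '' (τ : Set (Fin N)))) :
    ∀ᶠ Q' in nhds Q,
      convexHull ℝ (Q' '' (σ : Set (Fin N))) ≠ convexHull ℝ (Q' '' (τ : Set (Fin N))) := by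
  have hLc : IsClosed (convexHull ℝ (Q '' (τ : Set (Fin N)))) := (hull_compact Q τ).isClosed
  have hLne : (convexHull ℝ (Q '' (τ : Set (Fin N)))).Nonempty := hull_nonempty Q hτ
  have hr : 0 < Metric.infDist p (convexHull ℝ (Q '' (τ : Set (Fin N)))) :=
    (hLc.notMem_iff_infDist_pos hLne).1 hpn
  set r := Metric.infDist p (convexHull ℝ (Q '' (τ : Set (Fin N)))) with hrdef
  filter_upwards [eventually_dist_lt Q (show 0 < r/3 by positivity)] with Q' hQ' heq
  have h1 : ∀ i ∈ σ, dist (Q i) (Q' i) ≤ r/3 := fun i _ => by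
    rw [dist_comm]; exact (hQ' i).le
  obtain ⟨y, hy, hdy⟩ := hull_approx (Q := Q') (Q' := Q) h1 hp
  rw [heq] at hy
  obtain ⟨zz, hz, hdz⟩ := hull_approx (Q := Q) (Q' := Q') (fun i _ => (hQ' i).le) hy
  have hle : r ≤ dist p zz := Metric.infDist_le_dist_of_mem hz
  have htri : dist p zz ≤ dist p y + dist y zz := dist_triangle _ _ _
  linarith

/-- Distinct hulls stay distinct under perturbation. -/
lemma hull_ne_eventually {Q : Fin N → Pt} {σ τ : Finset (Fin N)}
    (hσ : σ.Nonempty) (hτ : τ.Nonempty)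
    (hne : convexHull ℝ (Q '' (σ : Set (Fin N))) ≠ convexHull ℝ (Q '' (τ : Set (Fin N)))) :
    ∀ᶠ Q' in nhds Q,
      convexHull ℝ (Q' '' (σ : Set (Fin N))) ≠ convexHull ℝ (Q' '' (τ : Set (Fin N))) := by
  by_cases hsub : convexHull ℝ (Q '' (σ : Set (Fin N))) ⊆ convexHull ℝ (Q '' (τ : Set (Fin N)))
  · have : ¬ convexHull ℝ (Q '' (τ : Set (Fin N))) ⊆ convexHull ℝ (Q '' (σ : Set (Fin N))) :=
      fun h => hne (Set.Subset.antisymm hsub h)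
    obtain ⟨p, hp, hpn⟩ := Set.not_subset.1 this
    exact (hull_ne_eventually_aux hσ hp hpn).mono fun Q' h => fun he => h he.symm
  · obtain ⟨p, hp, hpn⟩ := Set.not_subset.1 hsub
    exact hull_ne_eventually_aux hτ hp hpn

/-- Disjoint hulls stay disjoint under perturbation. -/
lemma hull_disjoint_eventually {Q : Fin N → Pt} {σ τ : Finset (Fin N)} (hσ : σ.Nonempty)
    (hd : convexHull ℝ (Q '' (σ : Set (Fin N))) ∩ convexHull ℝ (Q '' (τ : Set (Fin N))) = ∅) :
    ∀ᶠ Q' in nhds Q,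
      convexHull ℝ (Q' '' (σ : Set (Fin N))) ∩ convexHull ℝ (Q' '' (τ : Set (Fin N))) = ∅ := by
  have hLc : IsClosed (convexHull ℝ (Q '' (τ : Set (Fin N)))) := (hull_compact Q τ).isClosed
  obtain ⟨x₀, hx₀, hmin⟩ := (hull_compact Q σ).exists_isMinOn (hull_nonempty Q hσ)
    (Metric.continuous_infDist_pt (convexHull ℝ (Q '' (τ : Set (Fin N))))).continuousOn
  have hx₀n : x₀ ∉ convexHull ℝ (Q '' (τ : Set (Fin N))) := by
    intro h
    have : x₀ ∈ convexHull ℝ (Q '' (σ : Set (Fin N))) ∩ convexHull ℝ (Q '' (τ : Set (Fin N))) :=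
      ⟨hx₀, h⟩
    rw [hd] at this
    exact this
  rcases Set.eq_empty_or_nonempty (convexHull ℝ (Q '' (τ : Set (Fin N)))) with hLe | hLne
  · -- τ has empty hull; so do the perturbations? only if τ = ∅
    have hτe : τ = ∅ := by
      by_contra h
      obtain ⟨y, hy⟩ := hull_nonempty Q (Finset.nonempty_of_ne_empty h)
      rw [hLe] at hy
      exact hy
    refine Filter.Eventually.of_forall fun Q' => ?_
    rw [hτe]
    simp
  have hr : 0 < Metric.infDist x₀ (convexHull ℝ (Q '' (τ : Set (Fin N)))) :=
    (hLc.notMem_iff_infDist_pos hLne).1 hx₀n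
  set r := Metric.infDist x₀ (convexHull ℝ (Q '' (τ : Set (Fin N)))) with hrdef
  filter_upwards [eventually_dist_lt Q (show 0 < r/3 by positivity)] with Q' hQ'
  rw [Set.eq_empty_iff_forall_notMem]
  rintro x ⟨hx1, hx2⟩
  obtain ⟨y, hy, hdy⟩ := hull_approx (Q := Q) (Q' := Q') (fun i _ => (hQ' i).le) hx1
  obtain ⟨zz, hz, hdz⟩ := hull_approx (Q := Q) (Q' := Q') (fun i _ => (hQ' i).le) hx2
  have h1 : r ≤ Metric.infDist y (convexHull ℝ (Q '' (τ : Set (Fin N)))) := hmin hy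
  have h2 : Metric.infDist y (convexHull ℝ (Q '' (τ : Set (Fin N)))) ≤ dist y zz :=
    Metric.infDist_le_dist_of_mem hz
  have h3 : dist y zz ≤ dist y x + dist x zz := dist_triangle _ _ _
  rw [dist_comm y x] at h3
  linarith

/-- Extraction of cone generators at a vertex of a face. -/
lemma face_gen {Q : Fin N → Pt} {σ : Finset (Fin N)}
    (hAI : AffineIndependent ℝ (fun i : σ => Q i.1)) {v : Fin N} (hv : v ∈ σ)
    (hc3 : σ.card ≤ 3) (hc1 : 1 < σ.card) :
    ∃ i1 i2 : Fin N, i1 ≠ v ∧ i2 ≠ v ∧ σ = insert v {i1, i2} ∧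
      ∀ s t : ℝ, 0 ≤ s → 0 ≤ t → s • (Q i1 - Q v) + t • (Q i2 - Q v) = 0 →
        s = 0 ∧ t = 0 := by
  have hecard : (σ.erase v).card = σ.card - 1 := Finset.card_erase_of_mem hv
  have hcases : σ.card = 2 ∨ σ.card = 3 := by omega
  rcases hcases with h2 | h3
  · have he1 : (σ.erase v).card = 1 := by rw [hecard, h2]
    obtain ⟨i1, hi1⟩ := Finset.card_eq_one.1 he1
    have hm : i1 ∈ σ.erase v := by rw [hi1]; exact Finset.mem_singleton_self i1
    have hi1v : i1 ≠ v := (Finset.mem_erase.1 hm).1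
    have hi1σ : i1 ∈ σ := (Finset.mem_erase.1 hm).2
    refine ⟨i1, i1, hi1v, hi1v, ?_, ?_⟩
    · rw [show ({i1, i1} : Finset (Fin N)) = {i1} by simp, ← hi1, Finset.insert_erase hv]
    · intro s t hs ht hzero
      have hQ0 : Q i1 - Q v ≠ 0 :=
        sub_ne_zero.2 (ne_of_affineIndependent hAI hi1σ hv hi1v)
      have hsm : (s + t) • (Q i1 - Q v) = 0 := by rw [add_smul]; exact hzero
      rcases smul_eq_zero.1 hsm with h | h
      · constructor <;> linarith
      · exact absurd h hQ0
  · have he2 : (σ.erase v).card = 2 := by rw [hecard, h3]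
    obtain ⟨i1, i2, h12, hee⟩ := Finset.card_eq_two.1 he2
    have hm1 : i1 ∈ σ.erase v := by rw [hee]; simp
    have hm2 : i2 ∈ σ.erase v := by rw [hee]; simp
    have hi1v : i1 ≠ v := (Finset.mem_erase.1 hm1).1
    have hi2v : i2 ≠ v := (Finset.mem_erase.1 hm2).1
    refine ⟨i1, i2, hi1v, hi2v, by rw [← hee, Finset.insert_erase hv], ?_⟩
    intro s t hs ht hz
    have hd := det2_ne_of_affineIndependent hAI hv (Finset.mem_erase.1 hm1).2
      (Finset.mem_erase.1 hm2).2 (Ne.symm hi1v) (Ne.symm hi2v) h12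
    exact coeff_zero_of_det2_ne hd hz

end Eventually

section Vertex

/-- Two faces sharing exactly the vertex `v` keep intersecting exactly in `v`
under perturbation. -/
lemma vertex_eventually {Q : Fin N → Pt} {σ τ : Finset (Fin N)} {v i1 i2 j1 j2 : Fin N}
    (h1 : i1 ≠ v) (h2 : i2 ≠ v) (h3 : j1 ≠ v) (h4 : j2 ≠ v)
    (hσ : σ = insert v {i1, i2}) (hτ : τ = insert v {j1, j2})
    (hndσ : ∀ s t : ℝ, 0 ≤ s → 0 ≤ t → s • (Q i1 - Q v) + t • (Q i2 - Q v) = 0 →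
      s = 0 ∧ t = 0)
    (hndτ : ∀ s t : ℝ, 0 ≤ s → 0 ≤ t → s • (Q j1 - Q v) + t • (Q j2 - Q v) = 0 →
      s = 0 ∧ t = 0)
    (hKL : convexHull ℝ (Q '' (σ : Set (Fin N))) ∩ convexHull ℝ (Q '' (τ : Set (Fin N)))
      = {Q v}) :
    ∀ᶠ Q' in nhds Q,
      convexHull ℝ (Q' '' (σ : Set (Fin N))) ∩ convexHull ℝ (Q' '' (τ : Set (Fin N)))
        = {Q' v} := by
  classical
  set Φ : (Fin N → Pt) → (Fin 4 → ℝ) → Pt := fun R w =>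
    w 0 • (R i1 - R v) + w 1 • (R i2 - R v) - w 2 • (R j1 - R v) - w 3 • (R j2 - R v)
    with hΦdef
  -- at Q, Φ has no zero on the standard simplex
  have hQΦ : ∀ w ∈ stdSimplex ℝ (Fin 4), Φ Q w ≠ 0 := by
    rintro w ⟨hw0, hw1⟩ h0
    have hsum : w 0 + w 1 + w 2 + w 3 = 1 := by rwa [Fin.sum_univ_four] at hw1
    have hz : w 0 • (Q i1 - Q v) + w 1 • (Q i2 - Q v)
        = w 2 • (Q j1 - Q v) + w 3 • (Q j2 - Q v) := by
      have h0' : w 0 • (Q i1 - Q v) + w 1 • (Q i2 - Q v) - w 2 • (Q j1 - Q v)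
          - w 3 • (Q j2 - Q v) = 0 := h0
      linear_combination (norm := module) h0'
    by_cases hzz : w 0 • (Q i1 - Q v) + w 1 • (Q i2 - Q v) = 0
    · obtain ⟨e1, e2⟩ := hndσ _ _ (hw0 0) (hw0 1) hzz
      obtain ⟨e3, e4⟩ := hndτ _ _ (hw0 2) (hw0 3) (by rw [← hz]; exact hzz)
      rw [e1, e2, e3, e4] at hsum
      norm_num at hsum
    · have hw01 : w 0 + w 1 ≤ 1 := by have := hw0 2; have := hw0 3; linarith
      have hw23 : w 2 + w 3 ≤ 1 := by have := hw0 0; have := hw0 1; linarith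
      have hmem1 := gen_mem hσ Q (hw0 0) (hw0 1) hw01
      have hmem2 := gen_mem hτ Q (hw0 2) (hw0 3) hw23
      rw [← hz] at hmem2
      have hin : Q v + (w 0 • (Q i1 - Q v) + w 1 • (Q i2 - Q v)) ∈ ({Q v} : Set Pt) := by
        rw [← hKL]; exact ⟨hmem1, hmem2⟩
      rw [Set.mem_singleton_iff] at hin
      exact hzz (by linear_combination (norm := module) hin)
  -- minimum of ‖Φ Q w‖ on the simplex
  have hcont : ContinuousOn (fun w => ‖Φ Q w‖) (stdSimplex ℝ (Fin 4)) := by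
    apply Continuous.continuousOn
    apply Continuous.norm
    exact ((((continuous_apply (0 : Fin 4)).smul continuous_const).add
      ((continuous_apply (1 : Fin 4)).smul continuous_const)).sub
      ((continuous_apply (2 : Fin 4)).smul continuous_const)).sub
      ((continuous_apply (3 : Fin 4)).smul continuous_const)
  have hsne : (stdSimplex ℝ (Fin 4)).Nonempty := by
    refine ⟨fun _ => 1/4, fun i => by norm_num, ?_⟩
    rw [Fin.sum_univ_four]
    norm_num
  obtain ⟨w₀, hw₀, hmin⟩ := (isCompact_stdSimplex ℝ (Fin 4)).exists_isMinOn hsne hcont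
  set δ := ‖Φ Q w₀‖ with hδdef
  have hδ0 : 0 < δ := norm_pos_iff.2 (hQΦ w₀ hw₀)
  filter_upwards [eventually_dist_lt Q (show 0 < δ/8 by positivity)] with Q' hQ'
  -- for each w in the simplex, Φ Q' w ≠ 0
  have hk : ∀ a : Fin N, ‖(Q a - Q v) - (Q' a - Q' v)‖ ≤ δ/4 := by
    intro a
    have e : (Q a - Q v) - (Q' a - Q' v) = (Q a - Q' a) - (Q v - Q' v) := by abel
    rw [e]
    have b1 : ‖Q a - Q' a‖ ≤ δ/8 := by
      rw [← dist_eq_norm, dist_comm]; exact (hQ' a).le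
    have b2 : ‖Q v - Q' v‖ ≤ δ/8 := by
      rw [← dist_eq_norm, dist_comm]; exact (hQ' v).le
    calc ‖(Q a - Q' a) - (Q v - Q' v)‖ ≤ ‖Q a - Q' a‖ + ‖Q v - Q' v‖ := norm_sub_le _ _
      _ ≤ δ/8 + δ/8 := add_le_add b1 b2
      _ = δ/4 := by ring
  have hΦ' : ∀ w ∈ stdSimplex ℝ (Fin 4), Φ Q' w ≠ 0 := by
    rintro w ⟨hw0, hw1⟩ h0
    have hsum : w 0 + w 1 + w 2 + w 3 = 1 := by rwa [Fin.sum_univ_four] at hw1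
    have e : Φ Q w - Φ Q' w
        = w 0 • ((Q i1 - Q v) - (Q' i1 - Q' v)) + w 1 • ((Q i2 - Q v) - (Q' i2 - Q' v))
          - w 2 • ((Q j1 - Q v) - (Q' j1 - Q' v)) - w 3 • ((Q j2 - Q v) - (Q' j2 - Q' v)) := by
      rw [hΦdef]
      module
    have hb : ∀ (r : ℝ) (a : Fin N), 0 ≤ r →
        ‖r • ((Q a - Q v) - (Q' a - Q' v))‖ ≤ r * (δ/4) := by
      intro r a hr
      rw [norm_smul, Real.norm_eq_abs, abs_of_nonneg hr]
      exact mul_le_mul_of_nonneg_left (hk a) hr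
    have hdiff : ‖Φ Q w - Φ Q' w‖ ≤ δ/4 := by
      rw [e]
      have n0 := hb (w 0) i1 (hw0 0)
      have n1 := hb (w 1) i2 (hw0 1)
      have n2 := hb (w 2) j1 (hw0 2)
      have n3 := hb (w 3) j2 (hw0 3)
      have t1 : ‖w 0 • ((Q i1 - Q v) - (Q' i1 - Q' v)) + w 1 • ((Q i2 - Q v) - (Q' i2 - Q' v))
          - w 2 • ((Q j1 - Q v) - (Q' j1 - Q' v)) - w 3 • ((Q j2 - Q v) - (Q' j2 - Q' v))‖
          ≤ ‖w 0 • ((Q i1 - Q v) - (Q' i1 - Q' v)) + w 1 • ((Q i2 - Q v) - (Q' i2 - Q' v))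
          - w 2 • ((Q j1 - Q v) - (Q' j1 - Q' v))‖ + ‖w 3 • ((Q j2 - Q v) - (Q' j2 - Q' v))‖ :=
        norm_sub_le _ _
      have t2 : ‖w 0 • ((Q i1 - Q v) - (Q' i1 - Q' v)) + w 1 • ((Q i2 - Q v) - (Q' i2 - Q' v))
          - w 2 • ((Q j1 - Q v) - (Q' j1 - Q' v))‖
          ≤ ‖w 0 • ((Q i1 - Q v) - (Q' i1 - Q' v)) + w 1 • ((Q i2 - Q v) - (Q' i2 - Q' v))‖
          + ‖w 2 • ((Q j1 - Q v) - (Q' j1 - Q' v))‖ := norm_sub_le _ _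
      have t3 : ‖w 0 • ((Q i1 - Q v) - (Q' i1 - Q' v)) + w 1 • ((Q i2 - Q v) - (Q' i2 - Q' v))‖
          ≤ ‖w 0 • ((Q i1 - Q v) - (Q' i1 - Q' v))‖ + ‖w 1 • ((Q i2 - Q v) - (Q' i2 - Q' v))‖ :=
        norm_add_le _ _
      have hfin : w 0 * (δ/4) + w 1 * (δ/4) + w 2 * (δ/4) + w 3 * (δ/4) = δ/4 := by
        have : (w 0 + w 1 + w 2 + w 3) * (δ/4) = 1 * (δ/4) := by rw [hsum]
        linarith [this]
      linarith
    have hlow : δ ≤ ‖Φ Q w‖ := hmin ⟨hw0, hw1⟩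
    have hzero : ‖Φ Q w‖ = ‖Φ Q w - Φ Q' w‖ := by rw [h0, sub_zero]
    rw [hzero] at hlow
    linarith
  -- conclude: the perturbed intersection is exactly the perturbed vertex
  apply Set.Subset.antisymm
  · rintro x ⟨hx1, hx2⟩
    obtain ⟨s, t, hs, ht, he1⟩ := gen_repr h1 h2 hσ Q' hx1
    obtain ⟨s', t', hs', ht', he2⟩ := gen_repr h3 h4 hτ Q' hx2
    by_cases hT : s + t + s' + t' = 0
    · have hs0 : s = 0 := by linarith
      have ht0 : t = 0 := by linarith
      rw [Set.mem_singleton_iff]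
      have : x - Q' v = 0 := by rw [he1, hs0, ht0]; simp
      exact sub_eq_zero.1 this
    · exfalso
      have hTpos : 0 < s + t + s' + t' := lt_of_le_of_ne (by linarith) (Ne.symm hT)
      set T := s + t + s' + t' with hTdef
      have hTne : T ≠ 0 := ne_of_gt hTpos
      have hwmem : (![s/T, t/T, s'/T, t'/T] : Fin 4 → ℝ) ∈ stdSimplex ℝ (Fin 4) := by
        constructor
        · intro i
          have d0 : (0:ℝ) ≤ s/T := div_nonneg hs (le_of_lt hTpos)
          have d1 : (0:ℝ) ≤ t/T := div_nonneg ht (le_of_lt hTpos)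
          have d2 : (0:ℝ) ≤ s'/T := div_nonneg hs' (le_of_lt hTpos)
          have d3 : (0:ℝ) ≤ t'/T := div_nonneg ht' (le_of_lt hTpos)
          fin_cases i <;> first | exact d0 | exact d1 | exact d2 | exact d3
        · rw [Fin.sum_univ_four]
          simp only [Matrix.cons_val_zero, Matrix.cons_val_one, Matrix.head_cons,
            Matrix.cons_val_two, Matrix.tail_cons, Matrix.cons_val_three]
          field_simp
          exact hTdef.symm
      have hx12 : s • (Q' i1 - Q' v) + t • (Q' i2 - Q' v)
          = s' • (Q' j1 - Q' v) + t' • (Q' j2 - Q' v) := by rw [← he1, ← he2]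
      have hzero : Φ Q' ![s/T, t/T, s'/T, t'/T] = 0 := by
        rw [hΦdef]
        simp only [Matrix.cons_val_zero, Matrix.cons_val_one, Matrix.head_cons,
          Matrix.cons_val_two, Matrix.tail_cons, Matrix.cons_val_three]
        have expand : (s/T) • (Q' i1 - Q' v) + (t/T) • (Q' i2 - Q' v)
            - (s'/T) • (Q' j1 - Q' v) - (t'/T) • (Q' j2 - Q' v)
            = (T⁻¹) • ((s • (Q' i1 - Q' v) + t • (Q' i2 - Q' v))
              - (s' • (Q' j1 - Q' v) + t' • (Q' j2 - Q' v))) := by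
          match_scalars <;> field_simp <;> ring
        rw [expand, hx12, sub_self, smul_zero]
      exact hΦ' _ hwmem hzero
  · rintro x hx
    rw [Set.mem_singleton_iff] at hx
    subst hx
    have hvσ : v ∈ σ := by simp [hσ]
    have hvτ : v ∈ τ := by simp [hτ]
    exact ⟨subset_convexHull ℝ _ (Set.mem_image_of_mem Q' hvσ),
      subset_convexHull ℝ _ (Set.mem_image_of_mem Q' hvτ)⟩

end Vertex



section Pair

lemma det2_flip (a b x : Pt) : det2 (a - b) (x - b) = -det2 (b - a) (x - a) := by
  simp [det2]; ring

/-- The key persistence lemma: for admissible `Q` and a pair of faces, nearby `Q'` still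
intersect the corresponding hulls in a common face. -/
lemma pair_eventually (Δc : ConnectivityComplex N) {Q : Fin N → Pt} (hQ : IsAdmissible Δc Q)
    {σ τ : Finset (Fin N)} (hσf : σ ∈ Δc.faces) (hτf : τ ∈ Δc.faces) :
    ∀ᶠ Q' in nhds Q,
      (convexHull ℝ (Q' '' (σ : Set (Fin N))) ∩ convexHull ℝ (Q' '' (τ : Set (Fin N)))).Nonempty →
      ∃ ρ : Finset (Fin N), ρ.Nonempty ∧ ρ ⊆ σ ∧ ρ ⊆ τ ∧
        convexHull ℝ (Q' '' (σ : Set (Fin N))) ∩ convexHull ℝ (Q' '' (τ : Set (Fin N)))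
          = convexHull ℝ (Q' '' (ρ : Set (Fin N))) := by
  classical
  by_cases hst : σ ⊆ τ
  · refine Filter.Eventually.of_forall fun Q' _ =>
      ⟨σ, Δc.mem_nonempty σ hσf, subset_rfl, hst, ?_⟩
    exact Set.inter_eq_left.2 (convexHull_mono (Set.image_mono (Finset.coe_subset.2 hst)))
  by_cases hts : τ ⊆ σ
  · refine Filter.Eventually.of_forall fun Q' _ =>
      ⟨τ, Δc.mem_nonempty τ hτf, hts, subset_rfl, ?_⟩
    exact Set.inter_eq_right.2 (convexHull_mono (Set.image_mono (Finset.coe_subset.2 hts)))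
  by_cases hne : (σ ∩ τ).Nonempty
  swap
  · -- the hulls are disjoint at Q, hence stay disjoint
    have hdisj : convexHull ℝ (Q '' (σ : Set (Fin N))) ∩ convexHull ℝ (Q '' (τ : Set (Fin N)))
        = ∅ := by
      by_contra h
      obtain ⟨ρ₀, hρ₀ne, hρ₀σ, hρ₀τ, _⟩ :=
        hQ.2.2.1 σ hσf τ hτf (Set.nonempty_iff_ne_empty.2 h)
      obtain ⟨a, ha⟩ := hρ₀ne
      exact hne ⟨a, Finset.mem_inter.2 ⟨hρ₀σ ha, hρ₀τ ha⟩⟩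
    exact (hull_disjoint_eventually (Δc.mem_nonempty σ hσf) hdisj).mono
      fun Q' h hint => absurd hint (by rw [h]; exact Set.not_nonempty_empty)
  -- σ ∩ τ is nonempty and a proper subset of both
  have hρσ : σ ∩ τ ⊆ σ := Finset.inter_subset_left
  have hρτ : σ ∩ τ ⊆ τ := Finset.inter_subset_right
  have hKL : convexHull ℝ (Q '' (σ : Set (Fin N))) ∩ convexHull ℝ (Q '' (τ : Set (Fin N)))
      = convexHull ℝ (Q '' ((σ ∩ τ : Finset (Fin N)) : Set (Fin N))) := by
    obtain ⟨a, ha⟩ := hne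
    have hint : (convexHull ℝ (Q '' (σ : Set (Fin N)))
        ∩ convexHull ℝ (Q '' (τ : Set (Fin N)))).Nonempty := by
      refine ⟨Q a, subset_convexHull ℝ _ (Set.mem_image_of_mem Q (hρσ ha)),
        subset_convexHull ℝ _ (Set.mem_image_of_mem Q (hρτ ha))⟩
    obtain ⟨ρ₀, hρ₀ne, hρ₀σ, hρ₀τ, hρ₀⟩ := hQ.2.2.1 σ hσf τ hτf hint
    apply Set.Subset.antisymm
    · rw [hρ₀]
      exact convexHull_mono (Set.image_mono
        (Finset.coe_subset.2 (Finset.subset_inter hρ₀σ hρ₀τ)))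
    · exact Set.subset_inter
        (convexHull_mono (Set.image_mono (Finset.coe_subset.2 hρσ)))
        (convexHull_mono (Set.image_mono (Finset.coe_subset.2 hρτ)))
  have hρσ' : σ ∩ τ ≠ σ := fun h => hst (Finset.inter_eq_left.1 h)
  have hρτ' : σ ∩ τ ≠ τ := fun h => hts (Finset.inter_eq_right.1 h)
  have hcardσ : (σ ∩ τ).card < σ.card :=
    Finset.card_lt_card (Finset.ssubset_iff_subset_ne.2 ⟨hρσ, hρσ'⟩)
  have hcardτ : (σ ∩ τ).card < τ.card :=
    Finset.card_lt_card (Finset.ssubset_iff_subset_ne.2 ⟨hρτ, hρτ'⟩)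
  have hc3σ : σ.card ≤ 3 := Δc.card_le_three σ hσf
  have hc3τ : τ.card ≤ 3 := Δc.card_le_three τ hτf
  have h1ρ : 1 ≤ (σ ∩ τ).card := Finset.card_pos.2 hne
  have hcard : (σ ∩ τ).card = 1 ∨ (σ ∩ τ).card = 2 := by omega
  rcases hcard with hcard1 | hcard2
  · -- ***** vertex case *****
    obtain ⟨v, hv⟩ := Finset.card_eq_one.1 hcard1
    have hvρ : v ∈ σ ∩ τ := by rw [hv]; exact Finset.mem_singleton_self v
    have hvσ : v ∈ σ := hρσ hvρ
    have hvτ : v ∈ τ := hρτ hvρ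
    obtain ⟨i1, i2, hi1, hi2, hσeq, hndσ⟩ :=
      face_gen (hQ.1 σ hσf) hvσ hc3σ (by omega)
    obtain ⟨j1, j2, hj1, hj2, hτeq, hndτ⟩ :=
      face_gen (hQ.1 τ hτf) hvτ hc3τ (by omega)
    have hKLv : convexHull ℝ (Q '' (σ : Set (Fin N))) ∩ convexHull ℝ (Q '' (τ : Set (Fin N)))
        = {Q v} := by rw [hKL, hv, hull_singleton]
    refine (vertex_eventually hi1 hi2 hj1 hj2 hσeq hτeq hndσ hndτ hKLv).mono
      fun Q' h _ => ⟨{v}, Finset.singleton_nonempty v, ?_, ?_, ?_⟩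
    · rw [← hv]; exact hρσ
    · rw [← hv]; exact hρτ
    · rw [hull_singleton]; exact h
  · -- ***** edge case *****
    obtain ⟨u, v, huv, huvρ⟩ := Finset.card_eq_two.1 hcard2
    have huρ : u ∈ σ ∩ τ := by rw [huvρ]; simp
    have hvρ : v ∈ σ ∩ τ := by rw [huvρ]; simp
    have huσ : u ∈ σ := hρσ huρ
    have hvσ : v ∈ σ := hρσ hvρ
    have huτ : u ∈ τ := hρτ huρ
    have hvτ : v ∈ τ := hρτ hvρ
    -- extract the third vertices
    have hsdσ : (σ \ (σ ∩ τ)).card = 1 := by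
      rw [Finset.card_sdiff_of_subset hρσ]; omega
    obtain ⟨c, hc⟩ := Finset.card_eq_one.1 hsdσ
    have hcmem : c ∈ σ \ (σ ∩ τ) := by rw [hc]; exact Finset.mem_singleton_self c
    have hcσ : c ∈ σ := (Finset.mem_sdiff.1 hcmem).1
    have hcρ : c ∉ σ ∩ τ := (Finset.mem_sdiff.1 hcmem).2
    have hσeq : σ = insert c (σ ∩ τ) := by
      ext x
      simp only [Finset.mem_insert]
      constructor
      · intro hx
        by_cases hxρ : x ∈ σ ∩ τ
        · exact Or.inr hxρ
        · left
          have : x ∈ σ \ (σ ∩ τ) := Finset.mem_sdiff.2 ⟨hx, hxρ⟩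
          rw [hc] at this
          exact Finset.mem_singleton.1 this
      · rintro (rfl | hx)
        · exact hcσ
        · exact hρσ hx
    have hsdτ : (τ \ (σ ∩ τ)).card = 1 := by
      rw [Finset.card_sdiff_of_subset hρτ]; omega
    obtain ⟨d, hd⟩ := Finset.card_eq_one.1 hsdτ
    have hdmem : d ∈ τ \ (σ ∩ τ) := by rw [hd]; exact Finset.mem_singleton_self d
    have hdτ : d ∈ τ := (Finset.mem_sdiff.1 hdmem).1
    have hdρ : d ∉ σ ∩ τ := (Finset.mem_sdiff.1 hdmem).2
    have hτeq : τ = insert d (σ ∩ τ) := by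
      ext x
      simp only [Finset.mem_insert]
      constructor
      · intro hx
        by_cases hxρ : x ∈ σ ∩ τ
        · exact Or.inr hxρ
        · left
          have : x ∈ τ \ (σ ∩ τ) := Finset.mem_sdiff.2 ⟨hx, hxρ⟩
          rw [hd] at this
          exact Finset.mem_singleton.1 this
      · rintro (rfl | hx)
        · exact hdτ
        · exact hρτ hx
    have hcu : c ≠ u := fun h => hcρ (h ▸ huρ)
    have hcv : c ≠ v := fun h => hcρ (h ▸ hvρ)
    have hdu : d ≠ u := fun h => hdρ (h ▸ huρ)
    have hdv : d ≠ v := fun h => hdρ (h ▸ hvρ)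
    have hcnotρ : c ∉ ({u, v} : Finset (Fin N)) := by simp [hcu, hcv]
    have hdnotρ : d ∉ ({u, v} : Finset (Fin N)) := by simp [hdu, hdv]
    -- nonvanishing determinants at Q
    have hfc : det2 (Q v - Q u) (Q c - Q u) ≠ 0 :=
      det2_ne_of_affineIndependent (hQ.1 σ hσf) huσ hvσ hcσ huv (Ne.symm hcu) (Ne.symm hcv)
    have hfd : det2 (Q v - Q u) (Q d - Q u) ≠ 0 :=
      det2_ne_of_affineIndependent (hQ.1 τ hτf) huτ hvτ hdτ huv (Ne.symm hdu) (Ne.symm hdv)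
    -- opposite signs at Q
    have hσeq' : σ = insert c ({u, v} : Finset (Fin N)) := by rw [hσeq, huvρ]
    have hτeq' : τ = insert d ({u, v} : Finset (Fin N)) := by rw [hτeq, huvρ]
    have hKL2 : convexHull ℝ (Q '' (σ : Set (Fin N))) ∩ convexHull ℝ (Q '' (τ : Set (Fin N)))
        = convexHull ℝ (Q '' (({u, v} : Finset (Fin N)) : Set (Fin N))) := by
      rw [hKL, huvρ]
    have hprod : det2 (Q v - Q u) (Q c - Q u) * det2 (Q v - Q u) (Q d - Q u) < 0 := by
      rcases lt_or_gt_of_ne hfc with hc0 | hc0 <;> rcases lt_or_gt_of_ne hfd with hd0 | hd0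
      · exfalso
        have hρswap : ({u, v} : Finset (Fin N)) = {v, u} := Finset.pair_comm u v
        have hσswap : σ = insert c ({v, u} : Finset (Fin N)) := by rw [hσeq', hρswap]
        have hτswap : τ = insert d ({v, u} : Finset (Fin N)) := by rw [hτeq', hρswap]
        have hKLswap : convexHull ℝ (Q '' (σ : Set (Fin N)))
            ∩ convexHull ℝ (Q '' (τ : Set (Fin N)))
            = convexHull ℝ (Q '' (({v, u} : Finset (Fin N)) : Set (Fin N))) := by
          rw [hKL2, hρswap]
        have hfcswap : 0 < det2 (Q u - Q v) (Q c - Q v) := by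
          rw [det2_flip]; linarith
        have hfdswap : 0 < det2 (Q u - Q v) (Q d - Q v) := by
          rw [det2_flip]; linarith
        exact edge_sign rfl hσswap hτswap (Ne.symm huv) hcv hcu hdv hdu hKLswap hfcswap hfdswap
      · exact mul_neg_of_neg_of_pos hc0 hd0
      · exact mul_neg_of_pos_of_neg hc0 hd0
      · exact (edge_sign rfl hσeq' hτeq' huv hcu hcv hdu hdv hKL2 hc0 hd0).elim
    -- the sign condition persists
    have hev : ∀ᶠ Q' in nhds Q,
        det2 (Q' v - Q' u) (Q' c - Q' u) * det2 (Q' v - Q' u) (Q' d - Q' u) < 0 :=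
      (((continuous_det2_sub u v c).mul (continuous_det2_sub u v d)).continuousAt
        (x := Q)).eventually_lt continuousAt_const hprod
    refine hev.mono fun Q' hQ'' _ => ⟨σ ∩ τ, hne, hρσ, hρτ, ?_⟩
    have hfc' : det2 (Q' v - Q' u) (Q' c - Q' u) ≠ 0 := by
      intro h; rw [h] at hQ''; simp at hQ''
    apply Set.Subset.antisymm
    · rintro x ⟨hx1, hx2⟩
      obtain ⟨w, hw0, hw1, hwx⟩ := (mem_hull_iff Q' σ x).1 hx1
      obtain ⟨w', hw0', hw1', hwx'⟩ := (mem_hull_iff Q' τ x).1 hx2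
      have hfx1 : det2 (Q' v - Q' u) (x - Q' u)
          = w c * det2 (Q' v - Q' u) (Q' c - Q' u) := by
        rw [← hwx, det2_combo _ _ hw1]
        rw [hσeq', Finset.sum_insert hcnotρ, sum_pair_of_ne huv, sub_self, det2_zero_right,
          det2_self, mul_zero, mul_zero, add_zero, add_zero]
      have hfx2 : det2 (Q' v - Q' u) (x - Q' u)
          = w' d * det2 (Q' v - Q' u) (Q' d - Q' u) := by
        rw [← hwx', det2_combo _ _ hw1']
        rw [hτeq', Finset.sum_insert hdnotρ, sum_pair_of_ne huv, sub_self, det2_zero_right,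
          det2_self, mul_zero, mul_zero, add_zero, add_zero]
      have hwc0 : w c = 0 := by
        have h0le : 0 ≤ (w c * det2 (Q' v - Q' u) (Q' c - Q' u))
            * (w' d * det2 (Q' v - Q' u) (Q' d - Q' u)) := by
          rw [← hfx1, ← hfx2]
          exact mul_self_nonneg _
        have hge : (w c * det2 (Q' v - Q' u) (Q' c - Q' u))
            * (w' d * det2 (Q' v - Q' u) (Q' d - Q' u)) ≤ 0 := by
          have e : (w c * det2 (Q' v - Q' u) (Q' c - Q' u))
              * (w' d * det2 (Q' v - Q' u) (Q' d - Q' u))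
              = (w c * w' d) * (det2 (Q' v - Q' u) (Q' c - Q' u)
                * det2 (Q' v - Q' u) (Q' d - Q' u)) := by ring
          rw [e]
          exact mul_nonpos_of_nonneg_of_nonpos
            (mul_nonneg (hw0 c hcσ) (hw0' d hdτ)) (le_of_lt hQ'')
        have hX0 : det2 (Q' v - Q' u) (x - Q' u) = 0 := by
          have hXX : det2 (Q' v - Q' u) (x - Q' u) * det2 (Q' v - Q' u) (x - Q' u)
              = (w c * det2 (Q' v - Q' u) (Q' c - Q' u))
                * (w' d * det2 (Q' v - Q' u) (Q' d - Q' u)) := by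
            rw [← hfx1, ← hfx2]
          have : det2 (Q' v - Q' u) (x - Q' u) * det2 (Q' v - Q' u) (x - Q' u) = 0 := by
            rw [hXX]
            linarith
          exact mul_self_eq_zero.1 this
        rw [hX0] at hfx1
        rcases mul_eq_zero.1 hfx1.symm with h | h
        · exact h
        · exact absurd h hfc'
      refine (mem_hull_iff Q' (σ ∩ τ) x).2
        ⟨w, fun i hi => hw0 i (hρσ hi), ?_, ?_⟩
      · rw [hσeq, Finset.sum_insert hcρ] at hw1
        rw [hwc0] at hw1
        linarith
      · rw [hσeq, Finset.sum_insert hcρ] at hwx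
        rw [hwc0, zero_smul, zero_add] at hwx
        exact hwx
    · exact Set.subset_inter
        (convexHull_mono (Set.image_mono (Finset.coe_subset.2 hρσ)))
        (convexHull_mono (Set.image_mono (Finset.coe_subset.2 hρτ)))

end Pair

/-- `M⁰_Δ` is an open subset of `ℝ^{2×N_V}`. -/
theorem stmt3 {N : ℕ} (hN : 3 ≤ N) (Δ : ConnectivityComplex N) :
    IsOpen (M0 Δ) := by
  classical
  rw [isOpen_iff_mem_nhds]
  intro Q hQ
  have hQa : IsAdmissible Δ Q := hQ
  have h1 : ∀ᶠ Q' in nhds Q, ∀ σ ∈ Δ.faces,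
      AffineIndependent ℝ fun i : σ => Q' i.1 := by
    rw [Filter.eventually_all_finset]
    intro σ hσ
    exact AI_eventually (Δ.card_le_three σ hσ) (hQa.1 σ hσ)
  have h3 : ∀ᶠ Q' in nhds Q, ∀ σ ∈ Δ.faces, ∀ τ ∈ Δ.faces,
      (convexHull ℝ (Q' '' (σ : Set (Fin N))) ∩ convexHull ℝ (Q' '' (τ : Set (Fin N)))).Nonempty →
      ∃ ρ : Finset (Fin N), ρ.Nonempty ∧ ρ ⊆ σ ∧ ρ ⊆ τ ∧
        convexHull ℝ (Q' '' (σ : Set (Fin N))) ∩ convexHull ℝ (Q' '' (τ : Set (Fin N)))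
          = convexHull ℝ (Q' '' (ρ : Set (Fin N))) := by
    rw [Filter.eventually_all_finset]
    intro σ hσ
    rw [Filter.eventually_all_finset]
    intro τ hτ
    exact pair_eventually Δ hQa hσ hτ
  have h4 : ∀ᶠ Q' in nhds Q, ∀ σ : Finset (Fin N), σ.Nonempty → σ ∉ Δ.faces →
      ∀ τ ∈ Δ.faces,
        convexHull ℝ (Q' '' (σ : Set (Fin N))) ≠ convexHull ℝ (Q' '' (τ : Set (Fin N))) := by
    rw [Filter.eventually_all]
    intro σ
    by_cases hσn : σ.Nonempty
    swap
    · exact Filter.Eventually.of_forall fun Q' hn => absurd hn hσn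
    by_cases hσf : σ ∈ Δ.faces
    · exact Filter.Eventually.of_forall fun Q' _ h => absurd hσf h
    · have hall : ∀ᶠ Q' in nhds Q, ∀ τ ∈ Δ.faces,
          convexHull ℝ (Q' '' (σ : Set (Fin N))) ≠ convexHull ℝ (Q' '' (τ : Set (Fin N))) := by
        rw [Filter.eventually_all_finset]
        intro τ hτ
        have hneQ : convexHull ℝ (Q '' (σ : Set (Fin N)))
            ≠ convexHull ℝ (Q '' (τ : Set (Fin N))) := by
          intro he
          exact hσf (hQa.2.2.2 σ hσn ⟨τ, hτ, he⟩)
        exact hull_ne_eventually hσn (Δ.mem_nonempty τ hτ) hneQ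
      exact hall.mono fun Q' h _ _ => h
  have hev : ∀ᶠ Q' in nhds Q, Q' ∈ M0 Δ := by
    filter_upwards [h1, h3, h4] with Q' hh1 hh3 hh4
    refine ⟨hh1, ?_, hh3, ?_⟩
    · intro σ hσ ρ hρσ hρne
      exact ⟨ρ, Δ.down_closed σ hσ ρ hρσ hρne, rfl⟩
    · intro σ hσn hmem
      by_contra hσf
      obtain ⟨τ, hτ, he⟩ := hmem
      exact hh4 σ hσn hσf τ hτ he
  rwa [Filter.eventually_iff, Set.setOf_mem_eq] at hev

end PlanarMesh
end
end
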